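/- arXiv:1809.09443 — 2 statements merged into one kernel-verified Lean document; each statement's English description precedes it below -/
import Mathlib

section
/- Let X be an integer-valued random variable with P(X = k) = (1/π₀)/(1+k²) for k ∈ ℤ, where π₀ = π·cosh(π)/sinh(π). Then for all t with -2π ≤ t ≤ 2π, the characteristic function of X satisfies E[e^{itX}] = cosh(π - |t|)/cosh(π). -/
open Real MeasureTheory Complex intervalIntegral

noncomputable def gc : ℝ → ℂ := fun x => Complex.cosh ((π : ℂ) - x)

instance fact_two_pi_pos : Fact ((0:ℝ) < 2 * π) := ⟨Real.two_pi_pos⟩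

lemma key_integral (n : ℤ) :
    (∫ x in (0:ℝ)..(2*π), Complex.exp (2 * π * Complex.I * (-n) * x / (2*π)) * gc x)
      = 2 * Real.sinh π / (1 + (n:ℂ)^2) := by
  have hpi : (2 * π * Complex.I : ℂ) ≠ 0 := by
    simp [Real.pi_ne_zero, Complex.I_ne_zero]
  have h1 : ∀ x : ℝ, Complex.exp (2 * π * Complex.I * (-n) * x / (2*π)) * gc x
      = (Complex.exp (π : ℂ) * Complex.exp ((-1 - n * Complex.I) * x)
        + Complex.exp (-(π : ℂ)) * Complex.exp ((1 - n * Complex.I) * x)) / 2 := by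
    intro x
    have : (2 * π * Complex.I * (-n) * x / (2*π) : ℂ) = (-n * Complex.I) * x := by
      have : (2 * (π:ℂ)) ≠ 0 := by simp [Real.pi_ne_zero]
      field_simp
    rw [this, gc, Complex.cosh, neg_sub, ← mul_div_assoc, mul_add,
      ← Complex.exp_add, ← Complex.exp_add, ← Complex.exp_add, ← Complex.exp_add]
    ring_nf
  simp_rw [h1]
  have hc1 : (-1 - (n:ℂ) * Complex.I) ≠ 0 := by
    intro h
    have := congrArg Complex.re h
    simp at this
  have hc2 : ((1:ℂ) - (n:ℂ) * Complex.I) ≠ 0 := by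
    intro h
    have := congrArg Complex.re h
    simp at this
  have i1 : (∫ x in (0:ℝ)..(2*π), Complex.exp ((-1 - n * Complex.I) * x))
      = (Complex.exp (-(2*π):ℝ) - 1) / (-1 - n * Complex.I) := by
    rw [integral_exp_mul_complex hc1]
    congr 1
    rw [show ((-1 - (n:ℂ) * Complex.I) * (2*π:ℝ)) = (-(2*π):ℝ) + ((-n : ℤ) : ℂ) * (2 * π * Complex.I) by
      push_cast; ring, Complex.exp_add, Complex.exp_int_mul_two_pi_mul_I]
    push_cast
    simp
  have i2 : (∫ x in (0:ℝ)..(2*π), Complex.exp ((1 - n * Complex.I) * x))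
      = (Complex.exp ((2*π):ℝ) - 1) / (1 - n * Complex.I) := by
    rw [integral_exp_mul_complex hc2]
    congr 1
    rw [show (((1:ℂ) - (n:ℂ) * Complex.I) * (2*π:ℝ)) = ((2*π):ℝ) + ((-n : ℤ) : ℂ) * (2 * π * Complex.I) by
      push_cast; ring, Complex.exp_add, Complex.exp_int_mul_two_pi_mul_I]
    push_cast
    simp
  have int1 : IntervalIntegrable (fun x : ℝ => Complex.exp ((-1 - n * Complex.I) * x))
      MeasureTheory.volume 0 (2*π) := by
    apply Continuous.intervalIntegrable; fun_prop
  have int2 : IntervalIntegrable (fun x : ℝ => Complex.exp ((1 - n * Complex.I) * x))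
      MeasureTheory.volume 0 (2*π) := by
    apply Continuous.intervalIntegrable; fun_prop
  rw [intervalIntegral.integral_div]
  rw [intervalIntegral.integral_add ((int1.const_mul _)) ((int2.const_mul _))]
  rw [intervalIntegral.integral_const_mul, intervalIntegral.integral_const_mul, i1, i2]
  have hsq : (1 + (n:ℂ)^2) ≠ 0 := by
    have h0 : ((1 + (n:ℝ)^2 : ℝ) : ℂ) = 1 + (n:ℂ)^2 := by push_cast; ring
    rw [← h0]
    exact_mod_cast (by positivity : (1 + (n:ℝ)^2) ≠ 0)
  have hE : Complex.exp (π:ℂ) ≠ 0 := Complex.exp_ne_zero _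
  have hsinh : (Real.sinh π : ℂ) = (Complex.exp (π:ℂ) - (Complex.exp (π:ℂ))⁻¹) / 2 := by
    rw [Complex.ofReal_sinh, ← Complex.exp_neg]
    rfl
  have hexp2 : Complex.exp ((2*π:ℝ)) = Complex.exp (π:ℂ) * Complex.exp (π:ℂ) := by
    rw [← Complex.exp_add]; push_cast; ring_nf
  have hexpm2 : Complex.exp ((-(2*π):ℝ)) = (Complex.exp (π:ℂ))⁻¹ * (Complex.exp (π:ℂ))⁻¹ := by
    rw [← Complex.exp_neg, ← Complex.exp_add]; push_cast; ring_nf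
  have hmi : Complex.exp (-(π:ℂ)) = (Complex.exp (π:ℂ))⁻¹ := Complex.exp_neg _
  have hI : (Complex.I)*(Complex.I) = -1 := Complex.I_mul_I
  rw [hsinh, hexp2, hexpm2, hmi]
  field_simp
  ring_nf
  simp only [Complex.I_sq]
  have hD : (-(Complex.exp (π:ℂ) ^ 3 * 2) - Complex.exp (π:ℂ) ^ 3 * (n:ℂ) ^ 2 * 2) ≠ 0 := by
    have h2 : (-(Complex.exp (π:ℂ) ^ 3 * 2) - Complex.exp (π:ℂ) ^ 3 * (n:ℂ) ^ 2 * 2)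
        = -2 * Complex.exp (π:ℂ) ^ 3 * (1 + (n:ℂ)^2) := by ring
    rw [h2]
    exact mul_ne_zero (mul_ne_zero (by norm_num) (pow_ne_zero _ hE)) hsq
  have huD := mul_inv_cancel₀ hD
  linear_combination


lemma gc_eq : gc 0 = gc (2*π) := by
  rw [gc, gc, show ((π:ℂ) - ((2*π:ℝ):ℂ)) = -(π:ℂ) by push_cast; ring, Complex.cosh_neg,
    Complex.ofReal_zero, sub_zero]

noncomputable def Fc : C(AddCircle (2*π), ℂ) :=
  ⟨AddCircle.liftIco (2*π) 0 gc,
    AddCircle.liftIco_zero_continuous gc_eq (Continuous.continuousOn (by unfold gc; fun_prop))⟩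

lemma hFc : ∀ x : AddCircle (2*π), Fc x = AddCircle.liftIco (2*π) 0 gc x := fun x => rfl

lemma coeff_eq (n : ℤ) :
    fourierCoeff (Fc : AddCircle (2*π) → ℂ) n
      = ((Real.sinh π / (π * (1 + (n:ℝ)^2)) : ℝ) : ℂ) := by
  rw [show (Fc : AddCircle (2*π) → ℂ) = AddCircle.liftIco (2*π) 0 gc from funext hFc,
    fourierCoeff_liftIco_eq, fourierCoeffOn_eq_integral]
  have hco : ∀ x : ℝ, (fourier (-n) (x : AddCircle (0 + 2*π - 0)) : ℂ) • gc x
      = Complex.exp (2 * π * Complex.I * (-n) * x / (2*π)) * gc x := by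
    intro x
    rw [smul_eq_mul, fourier_coe_apply]
    congr 2
    push_cast
    ring
  rw [intervalIntegral.integral_congr (fun x _ => hco x)]
  have h2 : (0:ℝ) + 2*π = 2*π := by ring
  rw [h2, key_integral n]
  have hsq : (1 + (n:ℝ)^2) ≠ 0 := by positivity
  rw [real_smul]
  push_cast
  have hpi : (π:ℂ) ≠ 0 := by exact_mod_cast Real.pi_ne_zero
  have hsqc : (1 + (n:ℂ)^2) ≠ 0 := by
    have h0 : ((1 + (n:ℝ)^2 : ℝ) : ℂ) = 1 + (n:ℂ)^2 := by push_cast; ring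
    rw [← h0]; exact_mod_cast hsq
  field_simp
  ring

lemma hassum_cosh {t : ℝ} (h1 : -(2*π) ≤ t) (h2 : t ≤ 2*π) :
    HasSum (fun n : ℤ =>
        ((Real.sinh π / (π * (1 + (n:ℝ)^2)) : ℝ) : ℂ) * Complex.exp (t * n * Complex.I))
      ((Real.cosh (π - |t|) : ℝ) : ℂ) := by
  have hsumm : Summable (fourierCoeff (Fc : AddCircle (2*π) → ℂ)) := by
    have hg : Summable (fun n : ℤ => |Real.sinh π / π| * (1 / (n:ℝ)^2)) :=
      (Real.summable_one_div_int_pow.mpr one_lt_two).mul_left _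
    refine Summable.of_norm_bounded_eventually hg ?_
    have hb : ∀ n : ℤ, n ≠ 0 → ‖fourierCoeff (Fc : AddCircle (2*π) → ℂ) n‖
        ≤ |Real.sinh π / π| * (1 / (n:ℝ)^2) := by
      intro n hn
      have hnz : ((n:ℝ)) ≠ 0 := Int.cast_ne_zero.mpr hn
      have hn2 : (0:ℝ) < (n:ℝ)^2 := by positivity
      rw [coeff_eq, Complex.norm_real, Real.norm_eq_abs, abs_div,
        _root_.abs_of_pos (by positivity : (0:ℝ) < π * (1+(n:ℝ)^2)), abs_div,
        _root_.abs_of_pos Real.pi_pos, div_mul_div_comm, mul_one]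
      apply div_le_div_of_nonneg_left (abs_nonneg _) (by positivity)
      nlinarith [Real.pi_pos]
    rw [Filter.eventually_cofinite]
    apply Set.Finite.subset (Set.finite_singleton (0:ℤ))
    intro n hn
    simp only [Set.mem_setOf_eq] at hn
    simp only [Set.mem_singleton_iff]
    by_contra h0
    exact hn (hb n h0)
  have H := has_pointwise_sum_fourier_series_of_summable hsumm ((t : ℝ) : AddCircle (2*π))
  have hterm : ∀ n : ℤ,
      fourierCoeff (Fc : AddCircle (2*π) → ℂ) n • fourier n ((t:ℝ) : AddCircle (2*π))
      = ((Real.sinh π / (π * (1 + (n:ℝ)^2)) : ℝ) : ℂ) * Complex.exp (t * n * Complex.I) := by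
    intro n
    rw [coeff_eq, smul_eq_mul, fourier_coe_apply]
    congr 2
    have hpi : (π:ℂ) ≠ 0 := by exact_mod_cast Real.pi_ne_zero
    push_cast
    field_simp
  have hval : (Fc ((t:ℝ) : AddCircle (2*π)) : ℂ) = ((Real.cosh (π - |t|) : ℝ) : ℂ) := by
    rcases lt_or_ge t 0 with hneg | hpos
    · have hmem : t + 2*π ∈ Set.Ico (0:ℝ) (2*π) := ⟨by linarith, by linarith⟩
      have hcoe : ((t : ℝ) : AddCircle (2*π)) = ((t + 2*π : ℝ) : AddCircle (2*π)) :=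
        (AddCircle.coe_add_period (2*π) t).symm
      rw [hFc, hcoe, AddCircle.liftIco_zero_coe_apply hmem, gc, abs_of_neg hneg, sub_neg_eq_add,
        show ((π:ℂ) - ((t + 2*π : ℝ):ℂ)) = -(((π + t : ℝ)):ℂ) by push_cast; ring,
        Complex.cosh_neg, ← Complex.ofReal_cosh]
    · rcases lt_or_ge t (2*π) with hlt | hge
      · have hmem : t ∈ Set.Ico (0:ℝ) (2*π) := ⟨hpos, hlt⟩
        rw [hFc, AddCircle.liftIco_zero_coe_apply hmem, gc, _root_.abs_of_nonneg hpos,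
          show ((π:ℂ) - ((t:ℝ):ℂ)) = ((π - t : ℝ):ℂ) by push_cast; ring,
          ← Complex.ofReal_cosh]
      · have hte : t = 2*π := le_antisymm h2 hge
        have hmem : (0:ℝ) ∈ Set.Ico (0:ℝ) (2*π) := ⟨le_refl _, Real.two_pi_pos⟩
        have hcoe : ((t : ℝ) : AddCircle (2*π)) = ((0 : ℝ) : AddCircle (2*π)) := by
          rw [hte]
          exact (AddCircle.coe_period (2*π)).trans (QuotientAddGroup.mk_zero _).symm
        rw [hFc, hcoe, AddCircle.liftIco_zero_coe_apply hmem, gc, hte,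
          _root_.abs_of_pos Real.two_pi_pos, show π - 2*π = -π from by ring, Real.cosh_neg,
          show ((π:ℂ) - ((0:ℝ):ℂ)) = ((π:ℝ):ℂ) by push_cast; ring,
          ← Complex.ofReal_cosh]
  rw [← hval, ← funext hterm]
  exact H

theorem stmt_4 {Ω : Type*} [MeasurableSpace Ω] (μ : Measure Ω) [IsProbabilityMeasure μ]
    (X : Ω → ℤ) (hX : Measurable X)
    (hpmf : ∀ k : ℤ, (μ {ω | X ω = k}).toReal =
      (1 / (π * Real.cosh π / Real.sinh π)) * (1 / (1 + (k : ℝ) ^ 2)))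
    (t : ℝ) (ht : -(2 * π) ≤ t ∧ t ≤ 2 * π) :
    ∫ ω, Complex.exp (t * (X ω : ℝ) * Complex.I) ∂μ =
      ((Real.cosh (π - |t|) / Real.cosh π : ℝ) : ℂ) := by
  obtain ⟨ht1, ht2⟩ := ht
  haveI hmap : IsProbabilityMeasure (μ.map X) := Measure.isProbabilityMeasure_map hX.aemeasurable
  set g : ℤ → ℂ := fun k => Complex.exp (t * ((k : ℤ) : ℝ) * Complex.I) with hg
  have hbnd : ∀ k : ℤ, ‖g k‖ = 1 := by
    intro k
    rw [hg]
    simp only [Complex.norm_exp]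
    simp [Complex.mul_re]
  have hint : Integrable g (μ.map X) := by
    refine ⟨(measurable_from_top).aestronglyMeasurable, ?_⟩
    exact HasFiniteIntegral.of_bounded (C := 1) (ae_of_all _ (fun k => (hbnd k).le))
  have step : ∫ ω, Complex.exp (t * (X ω : ℝ) * Complex.I) ∂μ = ∫ k, g k ∂(μ.map X) := by
    rw [integral_map hX.aemeasurable hint.1]
  rw [step, integral_countable' hint]
  have hmeas : ∀ k : ℤ, (μ.map X) {k} = μ {ω | X ω = k} := by
    intro k
    rw [Measure.map_apply hX (measurableSet_singleton k)]
    rfl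
  have hcoshne : Real.cosh π ≠ 0 := (Real.cosh_pos π).ne'
  have hsinhne : Real.sinh π ≠ 0 := by
    have : 0 < Real.sinh π := by
      rw [← Real.sinh_zero]
      exact Real.sinh_lt_sinh.mpr Real.pi_pos
    exact this.ne'
  have hterm2 : ∀ k : ℤ, ((μ.map X) {k}).toReal • g k
      = (((Real.sinh π / (π * (1 + (k:ℝ)^2)) : ℝ) : ℂ) * Complex.exp (t * k * Complex.I))
        / ((Real.cosh π : ℝ) : ℂ) := by
    intro k
    rw [hmeas k, hpmf k, hg, real_smul]
    have hsqc : (1 + (k:ℂ)^2) ≠ 0 := by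
      have h0 : ((1 + (k:ℝ)^2 : ℝ) : ℂ) = 1 + (k:ℂ)^2 := by push_cast; ring
      rw [← h0]
      exact_mod_cast (by positivity : (1 + (k:ℝ)^2) ≠ 0)
    have hpic : (π:ℂ) ≠ 0 := by exact_mod_cast Real.pi_ne_zero
    have hcoshc : ((Real.cosh π : ℝ) : ℂ) ≠ 0 := by exact_mod_cast hcoshne
    have hsinhc : ((Real.sinh π : ℝ) : ℂ) ≠ 0 := by exact_mod_cast hsinhne
    push_cast
    field_simp
  simp only [measureReal_def]
  rw [tsum_congr hterm2]
  have hsum := (hassum_cosh ht1 ht2).div_const ((Real.cosh π : ℝ) : ℂ)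
  rw [hsum.tsum_eq, Complex.ofReal_div]
end

section
/- Let λ > 0 and let X_λ be an integer-valued random variable with P(X_λ = k) = (tanh(λπ)/π)·λ/(λ² + k²), k ∈ ℤ. Then for all t with 0 ≤ t ≤ 2π, E[e^{itX_λ}] = cosh(λ(t - π))/cosh(λπ). -/
open Real MeasureTheory Complex intervalIntegral

lemma alg (A B u v : ℂ) (hu : u ≠ 0) (hv : v ≠ 0) (hAB : B * A = 1) :
    B/2 * ((A*A - 1)/u) + A/2 * ((B*B - 1)/(-v)) = (u+v) * ((A - B)/2) / (u*v) := by
  field_simp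
  linear_combination (v*A - u*B) * hAB

lemma keyint (l : ℝ) (hl : 0 < l) (n : ℤ) :
    ∫ x in (0:ℝ)..(2*π), Complex.exp (-Complex.I * n * x) * (Real.cosh (l*(x-π)) : ℂ)
      = 2 * l * Real.sinh (l*π) / (l^2 + n^2) := by
  have h1 : (l : ℂ) - Complex.I * n ≠ 0 := by
    intro h; have := congrArg Complex.re h; simp at this; linarith
  have h2 : -(l : ℂ) - Complex.I * n ≠ 0 := by
    intro h; have := congrArg Complex.re h; simp at this; linarith
  have hv : (l : ℂ) + Complex.I * n ≠ 0 := by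
    intro h; have := congrArg Complex.re h; simp at this; linarith
  have heq : ∀ x : ℝ, Complex.exp (-Complex.I * n * x) * (Real.cosh (l*(x-π)) : ℂ)
      = Complex.exp (-((l:ℂ)*π)) / 2 * Complex.exp (((l:ℂ) - Complex.I*n) * x)
        + Complex.exp (((l:ℂ)*π)) / 2 * Complex.exp ((-(l:ℂ) - Complex.I*n) * x) := by
    intro x
    have hcosh : ((Real.cosh (l*(x-π)) : ℝ) : ℂ)
        = (Complex.exp ((l:ℂ)*(x-π)) + Complex.exp (-((l:ℂ)*(x-π))))/2 := by
      rw [Real.cosh_eq]; push_cast; ring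
    have e3 : Complex.exp (-Complex.I*n*x) * Complex.exp ((l:ℂ)*((x:ℂ)-π))
        = Complex.exp (((l:ℂ)-Complex.I*n)*x) * Complex.exp (-((l:ℂ)*π)) := by
      rw [← Complex.exp_add, ← Complex.exp_add]; congr 1; ring
    have e4 : Complex.exp (-Complex.I*n*x) * Complex.exp (-((l:ℂ)*((x:ℂ)-π)))
        = Complex.exp ((-(l:ℂ)-Complex.I*n)*x) * Complex.exp ((l:ℂ)*π) := by
      rw [← Complex.exp_add, ← Complex.exp_add]; congr 1; ring
    calc Complex.exp (-Complex.I * n * x) * (Real.cosh (l*(x-π)) : ℂ)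
        = (Complex.exp (-Complex.I*n*x) * Complex.exp ((l:ℂ)*((x:ℂ)-π))
          + Complex.exp (-Complex.I*n*x) * Complex.exp (-((l:ℂ)*((x:ℂ)-π))))/2 := by
          rw [hcosh]; push_cast; ring
      _ = _ := by rw [e3, e4]; push_cast; ring
  rw [intervalIntegral.integral_congr (fun x _ => heq x)]
  rw [intervalIntegral.integral_add, intervalIntegral.integral_const_mul,
    intervalIntegral.integral_const_mul, integral_exp_mul_complex h1, integral_exp_mul_complex h2]
  · rw [Real.sinh_eq]
    push_cast
    simp only [mul_zero, Complex.exp_zero]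
    have e1 : Complex.exp (((l:ℂ) - Complex.I*n) * (2*(π:ℂ)))
        = Complex.exp ((l:ℂ)*π) * Complex.exp ((l:ℂ)*π) := by
      have h3 : Complex.exp (-((n:ℂ) * (2*π) * Complex.I)) = 1 := by
        rw [← Complex.exp_int_mul_two_pi_mul_I (-n)]; congr 1; push_cast; ring
      rw [show ((l:ℂ) - Complex.I*n) * (2*(π:ℂ))
          = ((l:ℂ)*π + (l:ℂ)*π) + -((n:ℂ)*(2*π)*Complex.I) by ring,
        Complex.exp_add, h3, mul_one, Complex.exp_add]
    have e2 : Complex.exp ((-(l:ℂ) - Complex.I*n) * (2*(π:ℂ)))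
        = Complex.exp (-((l:ℂ)*π)) * Complex.exp (-((l:ℂ)*π)) := by
      have h3 : Complex.exp (-((n:ℂ) * (2*π) * Complex.I)) = 1 := by
        rw [← Complex.exp_int_mul_two_pi_mul_I (-n)]; congr 1; push_cast; ring
      rw [show (-(l:ℂ) - Complex.I*n) * (2*(π:ℂ))
          = (-((l:ℂ)*π) + -((l:ℂ)*π)) + -((n:ℂ)*(2*π)*Complex.I) by ring,
        Complex.exp_add, h3, mul_one, Complex.exp_add]
    have hee : Complex.exp (-((l:ℂ)*π)) * Complex.exp (((l:ℂ)*π)) = 1 := by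
      rw [← Complex.exp_add]; simp
    have hfac : (l:ℂ)^2 + (n:ℂ)^2 = ((l:ℂ) - Complex.I*n) * ((l:ℂ) + Complex.I*n) := by
      ring_nf; rw [Complex.I_sq]; ring
    have hneg : -(l:ℂ) - Complex.I*n = -((l:ℂ) + Complex.I*n) := by ring
    have h2l : 2*(l:ℂ) = ((l:ℂ) - Complex.I*n) + ((l:ℂ) + Complex.I*n) := by ring
    rw [e1, e2, hfac, hneg, h2l]
    exact alg _ _ _ _ h1 hv hee
  · exact (Complex.continuous_exp.comp (continuous_const.mul Complex.continuous_ofReal)).intervalIntegrable 0 (2*π) |>.const_mul _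
  · exact (Complex.continuous_exp.comp (continuous_const.mul Complex.continuous_ofReal)).intervalIntegrable 0 (2*π) |>.const_mul _

section lift

variable (l : ℝ)

noncomputable def cc : ℝ → ℂ := fun x => (Real.cosh (l*(x-π)) : ℂ)

lemma cc_endpoint : cc l 0 = cc l (0 + 2*π) := by
  unfold cc
  congr 1
  rw [show l*(0-π) = -(l*π) by ring, show l*(0+2*π-π) = l*π by ring, Real.cosh_neg]

lemma cc_cont : Continuous (cc l) := by
  unfold cc
  fun_prop

noncomputable def F : C(AddCircle (2*π), ℂ) :=
  haveI : Fact (0 < 2*π) := ⟨by positivity⟩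
  ⟨AddCircle.liftIco (2*π) 0 (cc l),
    AddCircle.liftIco_continuous (cc_endpoint l) (cc_cont l).continuousOn⟩

lemma coeffF [Fact (0 < 2*π)] (hl : 0 < l) (n : ℤ) :
    fourierCoeff ⇑(F l) n
      = ((l * Real.sinh (l*π) / (π * (l^2+(n:ℝ)^2)) : ℝ) : ℂ) := by
  have h := fourierCoeff_liftIco_eq (T := 2*π) (a := 0) (cc l) n
  rw [show ⇑(F l) = AddCircle.liftIco (2*π) 0 (cc l) from rfl, h]
  rw [fourierCoeffOn_eq_integral]
  have hint : ∀ x ∈ Set.uIcc (0:ℝ) (0+2*π),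
      (fourier (-n) (x : AddCircle (0+2*π-0)) : ℂ) • cc l x
        = Complex.exp (-Complex.I * n * x) * (Real.cosh (l*(x-π)) : ℂ) := by
    intro x _
    rw [smul_eq_mul]
    congr 1
    rw [fourier_coe_apply]
    congr 1
    have hπ : ((0:ℝ)+2*π-0 : ℝ) ≠ 0 := by rw [zero_add, sub_zero]; positivity
    have hπc : (π:ℂ) ≠ 0 := by exact_mod_cast Real.pi_ne_zero
    push_cast
    field_simp
    ring
  rw [intervalIntegral.integral_congr hint]
  rw [show (0:ℝ)+2*π = 2*π by ring, keyint l hl n]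
  have hπ : (π:ℝ) ≠ 0 := Real.pi_ne_zero
  have hd : (l:ℝ)^2 + (n:ℝ)^2 ≠ 0 := by positivity
  rw [show (1:ℝ)/(2*π-0) = 1/(2*π) by norm_num]
  rw [real_smul]
  push_cast
  have hπc : (π:ℂ) ≠ 0 := by exact_mod_cast hπ
  have hdc : ((l:ℂ)^2 + (n:ℂ)^2) ≠ 0 := by
    intro hc; apply hd; exact_mod_cast hc
  field_simp

lemma summF [Fact (0 < 2*π)] (hl : 0 < l) :
    Summable (fourierCoeff ⇑(F l)) := by
  have hb : Summable (fun n : ℤ => (l * Real.sinh (l*π) / π) * (1/(n:ℝ)^2)) :=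
    (summable_one_div_int_pow.mpr one_lt_two).mul_left _
  apply Summable.of_norm_bounded_eventually hb
  have : ({0} : Set ℤ).Finite := Set.finite_singleton 0
  filter_upwards [this.compl_mem_cofinite] with n hn
  simp only [Set.mem_compl_iff, Set.mem_singleton_iff] at hn
  rw [coeffF l hl n]
  rw [Complex.norm_real, Real.norm_eq_abs]
  have hn2 : (1:ℝ) ≤ (n:ℝ)^2 := by
    have h := Int.one_le_abs (by exact_mod_cast hn : n ≠ 0)
    have : (1:ℤ) ≤ n^2 := by nlinarith [_root_.sq_abs n]
    exact_mod_cast this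
  have hs : 0 ≤ Real.sinh (l*π) := Real.sinh_nonneg_iff.mpr (by positivity)
  have h1 : 0 ≤ l * Real.sinh (l*π) / π := by positivity
  rw [_root_.abs_of_nonneg (by positivity : (0:ℝ) ≤ l * Real.sinh (l*π) / (π * (l^2+(n:ℝ)^2)))]
  rw [div_mul_eq_mul_div, mul_one_div, div_div]
  apply div_le_div_of_nonneg_left _ (by positivity) _
  · positivity
  · nlinarith [sq_nonneg (l:ℝ), Real.pi_pos]

lemma hassumF [Fact (0 < 2*π)] (hl : 0 < l) (x : ℝ) (hx : x ∈ Set.Ico (0:ℝ) (2*π)) :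
    HasSum (fun n : ℤ => ((l * Real.sinh (l*π) / (π * (l^2+(n:ℝ)^2)) : ℝ) : ℂ)
        * Complex.exp (Complex.I*n*x))
      ((Real.cosh (l*(x-π)) : ℂ)) := by
  have h := has_pointwise_sum_fourier_series_of_summable (summF l hl) (x : AddCircle (2*π))
  have hval : (F l) (x : AddCircle (2*π)) = ((Real.cosh (l*(x-π)) : ℂ)) := by
    have h2 : AddCircle.liftIco (2*π) 0 (cc l) ((x : ℝ) : AddCircle (2*π)) = cc l x :=
      AddCircle.liftIco_coe_apply (by rwa [zero_add])
    exact h2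
  have key : (fun n : ℤ => fourierCoeff (⇑(F l)) n • fourier n (x : AddCircle (2*π)))
      = fun n : ℤ => ((l * Real.sinh (l*π) / (π * (l^2+(n:ℝ)^2)) : ℝ) : ℂ)
        * Complex.exp (Complex.I*n*x) := by
    funext n
    rw [coeffF l hl n, smul_eq_mul]
    congr 1
    rw [fourier_coe_apply]
    congr 1
    have hπc : (π:ℂ) ≠ 0 := by exact_mod_cast Real.pi_ne_zero
    push_cast
    field_simp
  rw [key, hval] at h
  exact h

end lift

theorem stmt_15 {Ω : Type*} [MeasurableSpace Ω] (μ : Measure Ω) [IsProbabilityMeasure μ]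
    (l : ℝ) (hl : 0 < l) (X : Ω → ℤ) (hX : Measurable X)
    (hpmf : ∀ k : ℤ, (μ {ω | X ω = k}).toReal =
      (Real.tanh (l * π) / π) * (l / (l ^ 2 + (k : ℝ) ^ 2)))
    (t : ℝ) (ht : 0 ≤ t ∧ t ≤ 2 * π) :
    ∫ ω, Complex.exp (t * (X ω : ℝ) * Complex.I) ∂μ =
      ((Real.cosh (l * (t - π)) / Real.cosh (l * π) : ℝ) : ℂ) := by
  haveI : Fact (0 < 2*π) := ⟨by positivity⟩
  obtain ⟨ht0, ht2⟩ := ht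
  obtain ⟨x, hx, hexp, hcosh⟩ : ∃ x : ℝ, x ∈ Set.Ico (0:ℝ) (2*π) ∧
      (∀ k : ℤ, Complex.exp (t * (k:ℝ) * Complex.I) = Complex.exp (Complex.I*k*x)) ∧
      Real.cosh (l*(t-π)) = Real.cosh (l*(x-π)) := by
    rcases eq_or_lt_of_le ht2 with h2 | h2
    · refine ⟨0, ⟨le_refl _, by positivity⟩, fun k => ?_, ?_⟩
      · subst h2
        rw [show ((2*π:ℝ):ℂ) * ((k:ℝ):ℂ) * Complex.I = (k:ℂ) * (2*(π:ℂ)*Complex.I) by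
          push_cast; ring]
        rw [Complex.exp_int_mul_two_pi_mul_I]
        norm_num
      · subst h2
        rw [show l*(2*π-π) = l*π by ring, show l*((0:ℝ)-π) = -(l*π) by ring, Real.cosh_neg]
    · exact ⟨t, ⟨ht0, h2⟩, fun k => by push_cast; ring_nf, rfl⟩
  have hg : Measurable (fun k : ℤ => Complex.exp (t * (k:ℝ) * Complex.I)) :=
    measurable_of_countable _
  rw [← MeasureTheory.integral_map hX.aemeasurable hg.aestronglyMeasurable]
  haveI : IsProbabilityMeasure (μ.map X) := Measure.isProbabilityMeasure_map hX.aemeasurable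
  have hint : Integrable (fun k : ℤ => Complex.exp (t * (k:ℝ) * Complex.I)) (μ.map X) := by
    refine Integrable.mono' (integrable_const 1) hg.aestronglyMeasurable ?_
    refine Filter.Eventually.of_forall fun k => ?_
    rw [show ((t:ℝ):ℂ) * ((k:ℝ):ℂ) * Complex.I = ((t*k:ℝ):ℂ) * Complex.I by push_cast; ring]
    rw [Complex.norm_exp_ofReal_mul_I]
  rw [MeasureTheory.integral_countable' hint]
  have hm : ∀ k : ℤ, ((μ.map X) {k}).toReal
      = (Real.tanh (l * π) / π) * (l / (l ^ 2 + (k : ℝ) ^ 2)) := by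
    intro k
    rw [Measure.map_apply hX (measurableSet_singleton k)]
    exact hpmf k
  have hsum := (hassumF l hl x hx).div_const ((Real.cosh (l*π) : ℝ) : ℂ)
  have hterm : ∀ k : ℤ, ((μ.map X) {k}).toReal • Complex.exp (t*(k:ℝ)*Complex.I)
      = ((l * Real.sinh (l*π) / (π * (l^2+(k:ℝ)^2)) : ℝ) : ℂ) * Complex.exp (Complex.I*k*x)
        / ((Real.cosh (l*π) : ℝ) : ℂ) := by
    intro k
    rw [hm k, hexp k, real_smul]
    have hco : ((Real.tanh (l*π)/π * (l/(l^2+(k:ℝ)^2)) : ℝ) : ℂ)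
        = ((l * Real.sinh (l*π) / (π * (l^2+(k:ℝ)^2)) : ℝ):ℂ) / ((Real.cosh (l*π):ℝ):ℂ) := by
      rw [← Complex.ofReal_div]
      congr 1
      rw [Real.tanh_eq_sinh_div_cosh]
      have hc : Real.cosh (l*π) ≠ 0 := (Real.cosh_pos _).ne'
      have hπ : (π:ℝ) ≠ 0 := Real.pi_ne_zero
      have hd : (l:ℝ)^2 + (k:ℝ)^2 ≠ 0 := by positivity
      field_simp
    rw [hco]
    ring
  simp only [measureReal_def]
  rw [tsum_congr hterm, hsum.tsum_eq, Complex.ofReal_div, hcosh]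
end
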